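/- Let r be a positive integer and let f : {1,…,r} → {1,…,r} be a function satisfying: (i) s ≤ f(s) for all s, and (ii) whenever s ≤ t ≤ f(s), one has f(t) ≤ f(s). Then the number of permutations σ of {1,…,r} such that σ^{-1}(s) < σ^{-1}(t) for all pairs s < t with t ≤ f(s) equals r! / ∏_{s=1}^{r} (f(s) − s + 1). -/

import Mathlib

open Finset Equiv

namespace HookAux

variable {n : ℕ}

/-- Insert `v` at the front: the permutation sending `0 ↦ v` and `j.succ ↦ v.succAbove (τ j)`. -/
def ins (v : Fin (n+1)) (τ : Equiv.Perm (Fin n)) : Equiv.Perm (Fin (n+1)) :=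
  (finSuccEquiv n).trans ((τ.optionCongr).trans (finSuccEquiv' v).symm)

@[simp] lemma ins_zero (v : Fin (n+1)) (τ : Equiv.Perm (Fin n)) : ins v τ 0 = v := by
  simp [ins]

@[simp] lemma ins_succ (v : Fin (n+1)) (τ : Equiv.Perm (Fin n)) (j : Fin n) :
    ins v τ j.succ = v.succAbove (τ j) := by
  simp [ins]

@[simp] lemma ins_inv_self (v : Fin (n+1)) (τ : Equiv.Perm (Fin n)) : (ins v τ)⁻¹ v = 0 := by
  rw [Equiv.Perm.inv_def, Equiv.symm_apply_eq]; simp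

@[simp] lemma ins_inv_succAbove (v : Fin (n+1)) (τ : Equiv.Perm (Fin n)) (u : Fin n) :
    (ins v τ)⁻¹ (v.succAbove u) = (τ⁻¹ u).succ := by
  rw [Equiv.Perm.inv_def, Equiv.symm_apply_eq]
  simp [Equiv.Perm.inv_def]

/-- Delete the first value of `σ` (assumed to be `v`). -/
def del (v : Fin (n+1)) (σ : Equiv.Perm (Fin (n+1))) : Equiv.Perm (Fin n) :=
  Equiv.removeNone (((finSuccEquiv n).symm.trans (σ : Equiv (Fin (n+1)) (Fin (n+1)))).trans
    (finSuccEquiv' v))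

lemma del_ins (v : Fin (n+1)) (τ : Equiv.Perm (Fin n)) : del v (ins v τ) = τ := by
  apply Equiv.ext; intro a
  have h : (((finSuccEquiv n).symm.trans ((ins v τ : Equiv.Perm (Fin (n+1))) :
      Equiv (Fin (n+1)) (Fin (n+1)))).trans (finSuccEquiv' v)) (some a) = some (τ a) := by
    simp
  have := Equiv.removeNone_some _ ⟨τ a, h⟩
  rw [h] at this
  exact Option.some_inj.mp this

lemma ins_del (v : Fin (n+1)) (σ : Equiv.Perm (Fin (n+1))) (h0 : σ 0 = v) :
    ins v (del v σ) = σ := by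
  ext x
  induction x using Fin.cases with
  | zero => simp [h0]
  | succ j =>
    have hne : σ j.succ ≠ v := by
      rw [← h0]; exact fun h => (Fin.succ_ne_zero j) (σ.injective h)
    obtain ⟨u, hu⟩ := Fin.exists_succAbove_eq hne
    have h : (((finSuccEquiv n).symm.trans (σ : Equiv (Fin (n+1)) (Fin (n+1)))).trans
        (finSuccEquiv' v)) (some j) = some u := by
      simp [← hu]
    have h2 := Equiv.removeNone_some _ ⟨u, h⟩
    rw [h] at h2
    have : del v σ j = u := Option.some_inj.mp h2
    rw [ins_succ, this, hu]


variable (f : Fin (n+1) → Fin (n+1)) (v : Fin (n+1))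

/-- The function obtained from `f` by deleting the index `v`. -/
def fdel : Fin n → Fin n :=
  fun a => ((finSuccEquiv' v) (f (v.succAbove a))).getD a

variable {f v}

lemma f_succAbove_ne (h1 : ∀ s, s ≤ f s) (hv : ∀ s, s < v → f s < v) (a : Fin n) :
    f (v.succAbove a) ≠ v := by
  rcases lt_or_gt_of_ne (Fin.succAbove_ne v a) with h | h
  · exact (hv _ h).ne
  · exact (lt_of_lt_of_le h (h1 _)).ne'

lemma succAbove_fdel (h1 : ∀ s, s ≤ f s) (hv : ∀ s, s < v → f s < v) (a : Fin n) :
    v.succAbove (fdel f v a) = f (v.succAbove a) := by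
  obtain ⟨u, hu⟩ := Fin.exists_succAbove_eq (f_succAbove_ne h1 hv a)
  rw [fdel, ← hu, finSuccEquiv'_succAbove]
  simp

lemma fdel_le (h1 : ∀ s, s ≤ f s) (hv : ∀ s, s < v → f s < v) (a : Fin n) :
    a ≤ fdel f v a := by
  rw [← Fin.succAbove_le_succAbove_iff (p := v), succAbove_fdel h1 hv]
  exact h1 _

lemma fdel_mono (h1 : ∀ s, s ≤ f s) (h2 : ∀ s t, s ≤ t → t ≤ f s → f t ≤ f s)
    (hv : ∀ s, s < v → f s < v) (a b : Fin n) (hab : a ≤ b) (hb : b ≤ fdel f v a) :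
    fdel f v b ≤ fdel f v a := by
  rw [← Fin.succAbove_le_succAbove_iff (p := v), succAbove_fdel h1 hv, succAbove_fdel h1 hv]
  apply h2
  · exact (Fin.succAbove_le_succAbove_iff (p := v)).mpr hab
  · rw [← succAbove_fdel h1 hv]
    exact (Fin.succAbove_le_succAbove_iff (p := v)).mpr hb

lemma hook_fdel (h1 : ∀ s, s ≤ f s) (hv : ∀ s, s < v → f s < v) (a : Fin n) :
    ((fdel f v a : ℕ) - (a : ℕ) + 1) =
      ((f (v.succAbove a) : ℕ) - ((v.succAbove a : ℕ)) + 1) := by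
  have key := succAbove_fdel h1 hv a
  set b := fdel f v a with hb
  have hab : a ≤ b := fdel_le h1 hv a
  rcases lt_or_ge (Fin.castSucc a) v with hc | hc
  · rcases lt_or_ge (Fin.castSucc b) v with hd | hd
    · rw [Fin.succAbove_of_castSucc_lt _ _ hc] at key ⊢
      rw [Fin.succAbove_of_castSucc_lt _ _ hd] at key
      rw [← key]
      simp
    · -- contradiction with root property
      exfalso
      have h5 := hv (Fin.castSucc a) (by simpa using hc)
      rw [← Fin.succAbove_of_castSucc_lt _ _ hc, ← key,
        Fin.succAbove_of_le_castSucc _ _ hd] at h5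
      have : (v : ℕ) ≤ (b : ℕ) := by simpa [Fin.le_def] using hd
      have h6 : ((b : Fin n).succ : ℕ) < (v : ℕ) := by simpa [Fin.lt_def] using h5
      simp [Fin.val_succ] at h6
      omega
  · have hd : v ≤ Fin.castSucc b := hc.trans (Fin.castSucc_le_castSucc_iff.mpr hab)
    rw [Fin.succAbove_of_le_castSucc _ _ hc] at key ⊢
    rw [Fin.succAbove_of_le_castSucc _ _ hd] at key
    rw [← key]
    simp only [Fin.val_succ]
    omega


lemma valid_ins_iff (h1 : ∀ s, s ≤ f s) (hv : ∀ s, s < v → f s < v) (τ : Equiv.Perm (Fin n)) :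
    (∀ s t : Fin (n+1), s < t → t ≤ f s → (ins v τ)⁻¹ s < (ins v τ)⁻¹ t) ↔
    (∀ a b : Fin n, a < b → b ≤ fdel f v a → τ⁻¹ a < τ⁻¹ b) := by
  constructor
  · intro H a b hab hb
    have := H (v.succAbove a) (v.succAbove b)
      (Fin.succAbove_lt_succAbove_iff.mpr hab)
      (by rw [← succAbove_fdel h1 hv]; exact Fin.succAbove_le_succAbove_iff.mpr hb)
    simpa [Fin.succ_lt_succ_iff] using this
  · intro H s t hst hts
    rcases eq_or_ne t v with rfl | ht
    · exact absurd (hv s hst) (not_lt.mpr hts)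
    rcases eq_or_ne s v with rfl | hs
    · obtain ⟨b, rfl⟩ := Fin.exists_succAbove_eq ht
      rw [ins_inv_self, ins_inv_succAbove]
      exact Fin.succ_pos _
    · obtain ⟨a, rfl⟩ := Fin.exists_succAbove_eq hs
      obtain ⟨b, rfl⟩ := Fin.exists_succAbove_eq ht
      rw [ins_inv_succAbove, ins_inv_succAbove, Fin.succ_lt_succ_iff]
      apply H
      · exact Fin.succAbove_lt_succAbove_iff.mp hst
      · rw [← Fin.succAbove_le_succAbove_iff (p := v), succAbove_fdel h1 hv]
        exact hts

lemma main : ∀ (n : ℕ) (f : Fin n → Fin n), (∀ s, s ≤ f s) →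
    (∀ s t : Fin n, s ≤ t → t ≤ f s → f t ≤ f s) →
    (Finset.univ.filter (fun σ : Equiv.Perm (Fin n) =>
        ∀ s t : Fin n, s < t → t ≤ f s → σ⁻¹ s < σ⁻¹ t)).card
      * ∏ s : Fin n, ((f s : ℕ) - (s : ℕ) + 1) = n.factorial := by
  intro n
  induction n with
  | zero =>
    intro f h1 h2
    rw [Finset.filter_true_of_mem (fun σ _ => fun s => s.elim0)]
    simp
  | succ n ih =>
    intro f h1 h2
    classical
    set P : Equiv.Perm (Fin (n+1)) → Prop :=
      fun σ => ∀ s t : Fin (n+1), s < t → t ≤ f s → σ⁻¹ s < σ⁻¹ t with hP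
    set R : Finset (Fin (n+1)) := univ.filter (fun v => ∀ s, s < v → f s < v) with hRdef
    -- the fiberwise decomposition over the first value
    have hsplit : (univ.filter P).card
        = ∑ v : Fin (n+1), ((univ.filter P).filter (fun σ => σ 0 = v)).card :=
      Finset.card_eq_sum_card_fiberwise (fun σ _ => mem_univ (σ 0))
    have hfiber : ∀ v : Fin (n+1),
        ((univ.filter P).filter (fun σ => σ 0 = v)).card
          = if ∀ s, s < v → f s < v then
              (univ.filter (fun τ : Equiv.Perm (Fin n) =>
                ∀ a b : Fin n, a < b → b ≤ fdel f v a → τ⁻¹ a < τ⁻¹ b)).card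
            else 0 := by
      intro v
      split_ifs with hv
      · apply Finset.card_bij' (fun σ _ => del v σ) (fun τ _ => ins v τ)
        · intro σ hσ
          simp only [mem_filter, mem_univ, true_and] at hσ ⊢
          obtain ⟨hPσ, h0⟩ := hσ
          rw [← ins_del v σ h0] at hPσ
          exact (valid_ins_iff h1 hv (del v σ)).mp hPσ
        · intro τ hτ
          simp only [mem_filter, mem_univ, true_and] at hτ ⊢
          exact ⟨(valid_ins_iff h1 hv τ).mpr hτ, ins_zero v τ⟩
        · intro σ hσ
          simp only [mem_filter] at hσ
          exact ins_del v σ hσ.2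
        · intro τ _
          exact del_ins v τ
      · rw [Finset.card_eq_zero, Finset.eq_empty_iff_forall_notMem]
        intro σ hσ
        simp only [mem_filter, mem_univ, true_and] at hσ
        obtain ⟨hPσ, h0⟩ := hσ
        push_neg at hv
        obtain ⟨s, hsv, hfs⟩ := hv
        have := hPσ s v hsv hfs
        rw [← h0, Equiv.Perm.inv_def, Equiv.symm_apply_apply] at this
        exact absurd this (Fin.not_lt_zero _)
    -- covering property of the root intervals
    have cover : ∀ t : Fin (n+1), ∃ v, (∀ s, s < v → f s < v) ∧ v ≤ t ∧ t ≤ f v := by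
      have key : ∀ m : ℕ, ∀ t : Fin (n+1), (t : ℕ) ≤ m →
          ∃ v, (∀ s, s < v → f s < v) ∧ v ≤ t ∧ t ≤ f v := by
        intro m
        induction m with
        | zero =>
          intro t ht
          exact ⟨t, fun s hs => absurd (Fin.lt_def.mp hs) (by omega), le_refl t, h1 t⟩
        | succ m ihm =>
          intro t ht
          by_cases hroot : ∀ s, s < t → f s < t
          · exact ⟨t, hroot, le_refl t, h1 t⟩
          · push_neg at hroot
            obtain ⟨s, hst, hfs⟩ := hroot
            obtain ⟨v, hv, hvs, hsf⟩ := ihm s (by have := Fin.lt_def.mp hst; omega)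
            exact ⟨v, hv, hvs.trans hst.le, hfs.trans (h2 v s hvs hsf)⟩
      intro t
      exact key (t : ℕ) t le_rfl
    -- the root intervals tile {0, …, n}
    have htile : ∑ v ∈ R, ((f v : ℕ) - (v : ℕ) + 1) = n + 1 := by
      have hdisj0 : ∀ x y : Fin (n+1), (∀ s, s < y → f s < y) → x < y →
          Disjoint (Finset.Icc x (f x)) (Finset.Icc y (f y)) := by
        intro x y hy hlt
        rw [Finset.disjoint_left]
        intro t ht1 ht2
        rw [mem_Icc] at ht1 ht2
        exact absurd (ht2.1.trans ht1.2) (not_le.mpr (hy x hlt))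
      have hdisj : ∀ x ∈ R, ∀ y ∈ R, x ≠ y →
          Disjoint (Finset.Icc x (f x)) (Finset.Icc y (f y)) := by
        intro x hx y hy hxy
        rw [hRdef, mem_filter] at hx hy
        rcases hxy.lt_or_gt with h | h
        · exact hdisj0 x y hy.2 h
        · exact (hdisj0 y x hx.2 h).symm
      have hcup : (univ : Finset (Fin (n+1))) = R.biUnion (fun v => Finset.Icc v (f v)) := by
        ext t
        simp only [mem_univ, true_iff, mem_biUnion]
        obtain ⟨v, hv, h3, h4⟩ := cover t
        exact ⟨v, by rw [hRdef, mem_filter]; exact ⟨mem_univ v, hv⟩, mem_Icc.mpr ⟨h3, h4⟩⟩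
      have : ∑ v ∈ R, ((f v : ℕ) - (v : ℕ) + 1) = ∑ v ∈ R, (Finset.Icc v (f v)).card := by
        apply Finset.sum_congr rfl
        intro v _
        rw [Fin.card_Icc]
        have := Fin.le_def.mp (h1 v)
        omega
      rw [this, ← Finset.card_biUnion hdisj, ← hcup, Finset.card_univ, Fintype.card_fin]
    -- assemble
    rw [hsplit]
    have hsum2 : ∑ v : Fin (n+1), ((univ.filter P).filter (fun σ => σ 0 = v)).card
        = ∑ v ∈ R, (univ.filter (fun τ : Equiv.Perm (Fin n) =>
            ∀ a b : Fin n, a < b → b ≤ fdel f v a → τ⁻¹ a < τ⁻¹ b)).card := by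
      rw [Finset.sum_filter]
      exact Finset.sum_congr rfl (fun v _ => hfiber v)
    rw [hsum2, Finset.sum_mul]
    have hterm : ∀ v ∈ R, (univ.filter (fun τ : Equiv.Perm (Fin n) =>
          ∀ a b : Fin n, a < b → b ≤ fdel f v a → τ⁻¹ a < τ⁻¹ b)).card
            * ∏ s : Fin (n+1), ((f s : ℕ) - (s : ℕ) + 1)
        = n.factorial * ((f v : ℕ) - (v : ℕ) + 1) := by
      intro v hvR
      have hv : ∀ s, s < v → f s < v := (mem_filter.mp (hRdef ▸ hvR)).2
      rw [Fin.prod_univ_succAbove (fun s : Fin (n+1) => ((f s : ℕ) - (s : ℕ) + 1)) v]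
      have hca : ∏ a : Fin n, ((f (v.succAbove a) : ℕ) - ((v.succAbove a : ℕ)) + 1)
          = ∏ a : Fin n, ((fdel f v a : ℕ) - (a : ℕ) + 1) :=
        Finset.prod_congr rfl (fun a _ => (hook_fdel h1 hv a).symm)
      rw [hca]
      have := ih (fdel f v) (fdel_le h1 hv) (fdel_mono h1 h2 hv)
      calc _ = (univ.filter (fun τ : Equiv.Perm (Fin n) =>
            ∀ a b : Fin n, a < b → b ≤ fdel f v a → τ⁻¹ a < τ⁻¹ b)).card
              * (∏ a : Fin n, ((fdel f v a : ℕ) - (a : ℕ) + 1))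
              * ((f v : ℕ) - (v : ℕ) + 1) := by ring
        _ = n.factorial * ((f v : ℕ) - (v : ℕ) + 1) := by rw [this]
    rw [Finset.sum_congr rfl hterm, ← Finset.mul_sum, htile, Nat.factorial_succ, mul_comm]

end HookAux


/-- The abstract combinatorial content of formula (3.1) of the paper.
Let `f : Fin r → Fin r` satisfy `s ≤ f s` for all `s`, and `f t ≤ f s` whenever
`s ≤ t ≤ f s`.  Then the number of permutations `σ` of `Fin r` such that
`σ⁻¹ s < σ⁻¹ t` for all pairs `s < t` with `t ≤ f s` equals
`r! / ∏ₛ (f s − s + 1)`. -/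
theorem card_admissible_perms (r : ℕ) (hr : 0 < r) (f : Fin r → Fin r)
    (h1 : ∀ s, s ≤ f s)
    (h2 : ∀ s t : Fin r, s ≤ t → t ≤ f s → f t ≤ f s) :
    ((Finset.univ.filter (fun σ : Equiv.Perm (Fin r) =>
        ∀ s t : Fin r, s < t → t ≤ f s → σ⁻¹ s < σ⁻¹ t)).card : ℚ) =
      (r.factorial : ℚ) / ∏ s : Fin r, (((f s : ℕ) - (s : ℕ) + 1 : ℕ) : ℚ) := by
  have key := HookAux.main r f h1 h2
  have hne : (∏ s : Fin r, (((f s : ℕ) - (s : ℕ) + 1 : ℕ) : ℚ)) ≠ 0 := by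
    apply Finset.prod_ne_zero_iff.mpr
    intro s _
    exact Nat.cast_ne_zero.mpr (Nat.succ_ne_zero _)
  rw [eq_div_iff hne]
  exact_mod_cast key
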